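/- Let n ≥ 1, let ψ₁, …, ψ_n ∈ H, let α ∈ ℝ, let G > 0, and let ℓ₁, …, ℓ_n : ℝ → ℝ be twice differentiable with |ℓ_i''(u)| ≤ G for all u ∈ ℝ and all i. Suppose ‖ψ_i‖ ≤ √R for every i and that each ψ_i satisfies ‖ψ_i‖_{−α} < ∞. Then for every x ∈ H and all h, k ∈ H with ‖k‖_α < ∞, | (1/n) Σ_{i=1}^n ℓ_i''(⟨x, ψ_i⟩) ⟨ψ_i, h⟩ ⟨ψ_i, k⟩ | ≤ G · √R · ( (1/n) Σ_{i=1}^n ‖ψ_i‖_{−α}² )^{1/2} · ‖h‖ · ‖k‖_α. -/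

import Mathlib

open scoped RealInnerProductSpace BigOperators

/-- Cauchy–Schwarz for tsums of real sequences. -/
lemma tsum_cs_aux (a b : ℕ → ℝ) (ha : Summable (fun j => a j ^ 2))
    (hb : Summable (fun j => b j ^ 2)) :
    |∑' j, a j * b j| ≤ Real.sqrt (∑' j, a j ^ 2) * Real.sqrt (∑' j, b j ^ 2) := by
  have habs : Summable (fun j => |a j * b j|) := by
    refine Summable.of_nonneg_of_le (fun j => abs_nonneg _)
      (fun j => ?_) ((ha.add hb).div_const 2)
    have := sq_nonneg (|a j| - |b j|)
    rw [abs_mul]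
    nlinarith [abs_nonneg (a j), abs_nonneg (b j), sq_abs (a j), sq_abs (b j)]
  have h0 : ‖∑' j, a j * b j‖ ≤ ∑' j, ‖a j * b j‖ :=
    norm_tsum_le_tsum_norm (by simpa only [Real.norm_eq_abs] using habs)
  simp only [Real.norm_eq_abs] at h0
  refine h0.trans ?_
  refine Summable.tsum_le_of_sum_le habs (fun s => ?_)
  have h1 : (∑ j ∈ s, |a j| * |b j|) ^ 2 ≤
      (∑ j ∈ s, a j ^ 2) * ∑ j ∈ s, b j ^ 2 := by
    simpa [sq_abs] using Finset.sum_mul_sq_le_sq_mul_sq s (fun j => |a j|) (fun j => |b j|)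
  have h2 : ∑ j ∈ s, |a j * b j| = ∑ j ∈ s, |a j| * |b j| := by simp [abs_mul]
  have hnn : 0 ≤ ∑ j ∈ s, |a j| * |b j| :=
    Finset.sum_nonneg fun j _ => mul_nonneg (abs_nonneg _) (abs_nonneg _)
  rw [h2]
  calc ∑ j ∈ s, |a j| * |b j| = Real.sqrt ((∑ j ∈ s, |a j| * |b j|) ^ 2) :=
        (Real.sqrt_sq hnn).symm
    _ ≤ Real.sqrt ((∑' j, a j ^ 2) * ∑' j, b j ^ 2) := by
        refine Real.sqrt_le_sqrt (h1.trans (mul_le_mul ?_ ?_ ?_ ?_))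
        · exact Summable.sum_le_tsum s (fun j _ => sq_nonneg _) ha
        · exact Summable.sum_le_tsum s (fun j _ => sq_nonneg _) hb
        · exact Finset.sum_nonneg fun j _ => sq_nonneg _
        · exact tsum_nonneg fun j => sq_nonneg _
    _ = Real.sqrt (∑' j, a j ^ 2) * Real.sqrt (∑' j, b j ^ 2) :=
        Real.sqrt_mul (tsum_nonneg fun j => sq_nonneg _) _

/-- **Bound on the second derivative of the empirical risk in the weighted norms.** -/
theorem stmt6 {H : Type*} [NormedAddCommGroup H] [InnerProductSpace ℝ H] [CompleteSpace H]
    (f : HilbertBasis ℕ ℝ H) (μ : ℕ → ℝ) (hμpos : ∀ k, 0 < μ k) (hμ0 : ∀ k, μ k ≤ μ 0)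
    (n : ℕ) (hn : 1 ≤ n) (ψ : Fin n → H) (α : ℝ) (G R : ℝ) (hG : 0 < G)
    (ℓ : Fin n → ℝ → ℝ)
    (hdiff1 : ∀ i, Differentiable ℝ (ℓ i))
    (hdiff2 : ∀ i, Differentiable ℝ (deriv (ℓ i)))
    (hGbound : ∀ i u, |deriv (deriv (ℓ i)) u| ≤ G)
    (hψnorm : ∀ i, ‖ψ i‖ ≤ Real.sqrt R)
    (hψα : ∀ i, Summable (fun j => μ j ^ (-(2 : ℝ) * α) * ⟪ψ i, f j⟫ ^ 2)) :
    ∀ x h k : H, Summable (fun j => μ j ^ ((2 : ℝ) * α) * ⟪k, f j⟫ ^ 2) →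
      |(n : ℝ)⁻¹ * ∑ i, deriv (deriv (ℓ i)) ⟪x, ψ i⟫ * ⟪ψ i, h⟫ * ⟪ψ i, k⟫|
        ≤ G * Real.sqrt R *
            Real.sqrt ((n : ℝ)⁻¹ * ∑ i, ∑' j, μ j ^ (-(2 : ℝ) * α) * ⟪ψ i, f j⟫ ^ 2) *
            ‖h‖ * Real.sqrt (∑' j, μ j ^ ((2 : ℝ) * α) * ⟪k, f j⟫ ^ 2) := by
  intro x h k hk
  set A : Fin n → ℝ := fun i => Real.sqrt (∑' j, μ j ^ (-(2 : ℝ) * α) * ⟪ψ i, f j⟫ ^ 2) with hA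
  set B : ℝ := Real.sqrt (∑' j, μ j ^ ((2 : ℝ) * α) * ⟪k, f j⟫ ^ 2) with hB
  have hsq : ∀ (β : ℝ) j, (μ j ^ β) ^ 2 = μ j ^ ((2:ℝ) * β) := by
    intro β j
    rw [← Real.rpow_natCast (μ j ^ β) 2, ← Real.rpow_mul (hμpos j).le]
    norm_num [mul_comm]
  have hinner : ∀ i, |⟪ψ i, k⟫| ≤ A i * B := by
    intro i
    set a : ℕ → ℝ := fun j => μ j ^ (-α) * ⟪ψ i, f j⟫ with ha
    set b : ℕ → ℝ := fun j => μ j ^ α * ⟪k, f j⟫ with hb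
    have hab : ∀ j, a j * b j = ⟪ψ i, f j⟫ * ⟪f j, k⟫ := by
      intro j
      have h1 : μ j ^ (-α) * μ j ^ α = 1 := by
        rw [← Real.rpow_add (hμpos j)]; norm_num
      have hcomm : ⟪f j, k⟫ = ⟪k, f j⟫ := real_inner_comm _ _
      simp only [ha, hb]
      linear_combination (⟪ψ i, f j⟫ * ⟪k, f j⟫) * h1 - ⟪ψ i, f j⟫ * hcomm
    have ha2 : ∀ j, a j ^ 2 = μ j ^ (-(2:ℝ) * α) * ⟪ψ i, f j⟫ ^ 2 := by
      intro j
      simp only [ha, mul_pow, hsq (-α) j]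
      ring_nf
    have hb2 : ∀ j, b j ^ 2 = μ j ^ ((2:ℝ) * α) * ⟪k, f j⟫ ^ 2 := by
      intro j
      simp only [hb, mul_pow, hsq α j]
    have hsa : Summable (fun j => a j ^ 2) := by
      simpa only [ha2] using hψα i
    have hsb : Summable (fun j => b j ^ 2) := by
      simpa only [hb2] using hk
    have hparse : ⟪ψ i, k⟫ = ∑' j, a j * b j := by
      rw [tsum_congr hab]
      exact (f.tsum_inner_mul_inner (ψ i) k).symm
    rw [hparse, hA, hB]
    have := tsum_cs_aux a b hsa hsb
    rwa [tsum_congr ha2, tsum_congr hb2] at this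
  have hRnn : (0:ℝ) ≤ Real.sqrt R := Real.sqrt_nonneg R
  have hAnn : ∀ i, 0 ≤ A i := fun i => Real.sqrt_nonneg _
  have hBnn : (0:ℝ) ≤ B := Real.sqrt_nonneg _
  have hterm : ∀ i, |deriv (deriv (ℓ i)) ⟪x, ψ i⟫ * ⟪ψ i, h⟫ * ⟪ψ i, k⟫|
      ≤ (G * Real.sqrt R * ‖h‖ * B) * A i := by
    intro i
    rw [abs_mul, abs_mul]
    have h1 : |⟪ψ i, h⟫| ≤ Real.sqrt R * ‖h‖ := by
      calc |⟪ψ i, h⟫| ≤ ‖ψ i‖ * ‖h‖ := abs_real_inner_le_norm _ _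
        _ ≤ Real.sqrt R * ‖h‖ := mul_le_mul_of_nonneg_right (hψnorm i) (norm_nonneg h)
    have h2 := hinner i
    have h3 := hGbound i ⟪x, ψ i⟫
    have hstep := mul_le_mul (mul_le_mul h3 h1 (abs_nonneg _)
        (le_trans (abs_nonneg _) h3)) h2 (abs_nonneg _)
        (by positivity)
    calc |deriv (deriv (ℓ i)) ⟪x, ψ i⟫| * |⟪ψ i, h⟫| * |⟪ψ i, k⟫|
        ≤ G * (Real.sqrt R * ‖h‖) * (A i * B) := hstep
      _ = (G * Real.sqrt R * ‖h‖ * B) * A i := by ring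
  have hA2 : ∀ i, A i ^ 2 = ∑' j, μ j ^ (-(2:ℝ) * α) * ⟪ψ i, f j⟫ ^ 2 := by
    intro i
    exact Real.sq_sqrt (tsum_nonneg fun j =>
      mul_nonneg (Real.rpow_nonneg (hμpos j).le _) (sq_nonneg _))
  have hsumA : ∑ i, A i ≤ Real.sqrt n * Real.sqrt (∑ i, A i ^ 2) := by
    have h1 : (∑ i, (1:ℝ) * A i) ^ 2 ≤ (∑ i : Fin n, (1:ℝ) ^ 2) * ∑ i, A i ^ 2 :=
      Finset.sum_mul_sq_le_sq_mul_sq Finset.univ _ _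
    simp only [one_mul, one_pow, Finset.sum_const, Finset.card_univ, Fintype.card_fin,
      nsmul_eq_mul, mul_one] at h1
    calc ∑ i, A i = Real.sqrt ((∑ i, A i) ^ 2) :=
          (Real.sqrt_sq (Finset.sum_nonneg fun i _ => hAnn i)).symm
      _ ≤ Real.sqrt ((n : ℝ) * ∑ i, A i ^ 2) := Real.sqrt_le_sqrt h1
      _ = Real.sqrt n * Real.sqrt (∑ i, A i ^ 2) := Real.sqrt_mul (by positivity) _
  have hnpos : (0:ℝ) < n := by exact_mod_cast hn
  have hC : (0:ℝ) ≤ G * Real.sqrt R * ‖h‖ * B := by positivity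
  calc |(n : ℝ)⁻¹ * ∑ i, deriv (deriv (ℓ i)) ⟪x, ψ i⟫ * ⟪ψ i, h⟫ * ⟪ψ i, k⟫|
      = (n : ℝ)⁻¹ * |∑ i, deriv (deriv (ℓ i)) ⟪x, ψ i⟫ * ⟪ψ i, h⟫ * ⟪ψ i, k⟫| := by
        rw [abs_mul, abs_of_nonneg (by positivity : (0:ℝ) ≤ (n:ℝ)⁻¹)]
    _ ≤ (n : ℝ)⁻¹ * ∑ i, |deriv (deriv (ℓ i)) ⟪x, ψ i⟫ * ⟪ψ i, h⟫ * ⟪ψ i, k⟫| := by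
        gcongr
        exact Finset.abs_sum_le_sum_abs _ _
    _ ≤ (n : ℝ)⁻¹ * ∑ i, (G * Real.sqrt R * ‖h‖ * B) * A i := by
        gcongr with i
        exact hterm i
    _ = (n : ℝ)⁻¹ * ((G * Real.sqrt R * ‖h‖ * B) * ∑ i, A i) := by
        rw [← Finset.mul_sum]
    _ ≤ (n : ℝ)⁻¹ * ((G * Real.sqrt R * ‖h‖ * B) *
          (Real.sqrt n * Real.sqrt (∑ i, A i ^ 2))) := by
        gcongr
    _ = G * Real.sqrt R *
          Real.sqrt ((n : ℝ)⁻¹ * ∑ i, ∑' j, μ j ^ (-(2 : ℝ) * α) * ⟪ψ i, f j⟫ ^ 2) *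
          ‖h‖ * B := by
        have hAsum : ∑ i, A i ^ 2 = ∑ i, ∑' j, μ j ^ (-(2:ℝ) * α) * ⟪ψ i, f j⟫ ^ 2 :=
          Finset.sum_congr rfl fun i _ => hA2 i
        have hs : Real.sqrt n ≠ 0 := by positivity
        have h2 : Real.sqrt n * Real.sqrt n = (n : ℝ) := Real.mul_self_sqrt hnpos.le
        have hkey : Real.sqrt ((n:ℝ)⁻¹) = (n:ℝ)⁻¹ * Real.sqrt n := by
          rw [Real.sqrt_inv]
          field_simp
          exact (Real.sq_sqrt hnpos.le).symm
        rw [← hAsum, Real.sqrt_mul (by positivity) (∑ i, A i ^ 2), hkey]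
        ring
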